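/- For F(x) = ‖x⁺‖₂² on ℝ^n with gradient ∇F(x) = 2x⁺: if sequences (s_t), (m_t) in ℝ^n satisfy ⟨(S_{t-1} + m_t)⁺, s_t⟩ ≤ 0 for all 1 ≤ t ≤ T where S_t = ∑_{k=1}^t s_k and S_0 = 0, then ‖(S_T)⁺‖₂² ≤ ∑_{t=1}^T ‖s_t − m_t‖₂², and hence max_i (S_T)_i ≤ √(∑_{t=1}^T ‖s_t − m_t‖₂²). -/

import Mathlib

open RealInnerProductSpace

/-- Componentwise positive part (ReLU) on `ℝ^n`. -/
noncomputable def posPart17 {n : ℕ} (x : EuclideanSpace ℝ (Fin n)) :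
    EuclideanSpace ℝ (Fin n) := WithLp.toLp 2 (fun i => max (x i) 0)

lemma scalar17 (a b c : ℝ) :
    (max (a + c) 0) ^ 2 ≤ (max a 0) ^ 2 + 2 * (max (a + b) 0 * c) + (c - b) ^ 2 := by
  have h1 : (max (a + c) 0) ^ 2 ≤ (max (a + b) 0 + (c - b)) ^ 2 := by
    rcases le_or_gt (a + c) 0 with h | h
    · rw [max_eq_right h]; nlinarith [sq_nonneg ((a + b) ⊔ 0 + (c - b))]
    · have hle : a + c ≤ max (a + b) 0 + (c - b) := by
        have := le_max_left (a + b) 0; linarith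
      rw [max_eq_left h.le]
      nlinarith
  have h2 : (max (a + b) 0) ^ 2 ≤ (max a 0) ^ 2 + 2 * (max (a + b) 0) * b := by
    rcases le_or_gt (a + b) 0 with h | h
    · rw [max_eq_right h]; nlinarith [sq_nonneg (a ⊔ 0)]
    · rw [max_eq_left h.le]
      rcases le_or_gt a 0 with ha | ha
      · rw [max_eq_right ha]; nlinarith
      · rw [max_eq_left ha.le]; nlinarith [sq_nonneg b]
  nlinarith

lemma normsq17 {n : ℕ} (z : EuclideanSpace ℝ (Fin n)) :
    ‖z‖ ^ 2 = ∑ i, (z i) ^ 2 := by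
  rw [EuclideanSpace.norm_eq, Real.sq_sqrt (by positivity)]
  simp [sq_abs]

lemma key17 {n : ℕ} (x u v : EuclideanSpace ℝ (Fin n)) :
    ‖posPart17 (x + u)‖ ^ 2 ≤
      ‖posPart17 x‖ ^ 2 + 2 * ⟪posPart17 (x + v), u⟫ + ‖u - v‖ ^ 2 := by
  rw [normsq17, normsq17, normsq17, PiLp.inner_apply]
  simp only [posPart17, RCLike.inner_apply, conj_trivial, PiLp.add_apply, PiLp.sub_apply]
  calc ∑ i, (max (x i + u i) 0) ^ 2
      ≤ ∑ i, ((max (x i) 0) ^ 2 + 2 * (max (x i + v i) 0 * u i) + (u i - v i) ^ 2) :=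
        Finset.sum_le_sum fun i _ => scalar17 (x i) (v i) (u i)
    _ = _ := by rw [Finset.sum_add_distrib, Finset.sum_add_distrib, ← Finset.mul_sum]; exact congrArg₂ (· + ·) (congrArg (_ + ·) (congrArg (2 * ·) (Finset.sum_congr rfl fun i _ => mul_comm _ _))) rfl

theorem stmt_17 {n : ℕ} (T : ℕ)
    (s m : ℕ → EuclideanSpace ℝ (Fin n))
    (S : ℕ → EuclideanSpace ℝ (Fin n))
    (hS : ∀ t, S t = ∑ k ∈ Finset.Icc 1 t, s k)
    (hblackwell : ∀ t ∈ Finset.Icc 1 T, ⟪posPart17 (S (t - 1) + m t), s t⟫ ≤ 0) :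
    ‖posPart17 (S T)‖ ^ 2 ≤ ∑ t ∈ Finset.Icc 1 T, ‖s t - m t‖ ^ 2 ∧
      ∀ i, S T i ≤ Real.sqrt (∑ t ∈ Finset.Icc 1 T, ‖s t - m t‖ ^ 2) := by
  have main : ∀ N, (∀ t ∈ Finset.Icc 1 N, ⟪posPart17 (S (t - 1) + m t), s t⟫ ≤ 0) →
      ‖posPart17 (S N)‖ ^ 2 ≤ ∑ t ∈ Finset.Icc 1 N, ‖s t - m t‖ ^ 2 := by
    intro N
    induction N with
    | zero =>
      intro _
      have h0 : S 0 = 0 := by rw [hS]; simp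
      have hp : posPart17 (S 0) = 0 := by
        ext i; simp [posPart17, h0]
      simp [hp]
    | succ N ih =>
      intro hb
      have hbN : ∀ t ∈ Finset.Icc 1 N, ⟪posPart17 (S (t - 1) + m t), s t⟫ ≤ 0 := by
        intro t ht
        exact hb t (Finset.mem_Icc.mpr ⟨(Finset.mem_Icc.mp ht).1,
          (Finset.mem_Icc.mp ht).2.trans (Nat.le_succ N)⟩)
      have hstep : S (N + 1) = S N + s (N + 1) := by
        rw [hS, hS, Finset.sum_Icc_succ_top (Nat.succ_le_succ (Nat.zero_le N))]
      have hkey := key17 (S N) (s (N + 1)) (m (N + 1))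
      have hbl : ⟪posPart17 (S N + m (N + 1)), s (N + 1)⟫ ≤ 0 := by
        have := hb (N + 1) (Finset.mem_Icc.mpr ⟨Nat.succ_le_succ (Nat.zero_le N), le_refl _⟩)
        simpa using this
      rw [Finset.sum_Icc_succ_top (Nat.succ_le_succ (Nat.zero_le N))]
      rw [hstep]
      have := ih hbN
      linarith
  have h1 := main T hblackwell
  refine ⟨h1, fun i => ?_⟩
  have hsum : (0:ℝ) ≤ ∑ t ∈ Finset.Icc 1 T, ‖s t - m t‖ ^ 2 := by positivity
  have hnorm : ‖posPart17 (S T)‖ ≤ Real.sqrt (∑ t ∈ Finset.Icc 1 T, ‖s t - m t‖ ^ 2) :=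
    (Real.le_sqrt (norm_nonneg _) hsum).mpr h1
  have hcomp : S T i ≤ ‖posPart17 (S T)‖ := by
    have hsq : (posPart17 (S T) i) ^ 2 ≤ ‖posPart17 (S T)‖ ^ 2 := by
      rw [normsq17]
      exact Finset.single_le_sum (f := fun j => (posPart17 (S T) j ^ 2 : ℝ)) (fun j _ => sq_nonneg _) (Finset.mem_univ i)
    have hp : (0:ℝ) ≤ posPart17 (S T) i := le_max_right _ _
    have h2 : posPart17 (S T) i ≤ ‖posPart17 (S T)‖ := by
      nlinarith [norm_nonneg (posPart17 (S T))]
    have h3 : S T i ≤ posPart17 (S T) i := le_max_left _ _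
    linarith
  linarith
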